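/- Let G be a simple graph on a finite nonempty vertex set with an interval realization l, r, and let v be a vertex whose right endpoint r v is minimal among all vertices. Then there exists an independent set of G of maximum cardinality that contains v. -/

import Mathlib

/-- In an interval graph on a finite nonempty vertex set, if `v` has minimal right endpoint,
then some maximum-cardinality independent set contains `v`. -/
theorem interval_graph_greedy_mis (V : Type*) [Fintype V] [Nonempty V]
    (G : SimpleGraph V) (l r : V → ℝ)
    (hlr : ∀ v, l v ≤ r v)
    (hadj : ∀ u v : V, u ≠ v →
      (G.Adj u v ↔ (Set.Icc (l u) (r u) ∩ Set.Icc (l v) (r v)).Nonempty))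
    (v : V) (hv : ∀ u : V, r v ≤ r u) :
    ∃ s : Set V, v ∈ s ∧ (∀ a ∈ s, ∀ b ∈ s, a ≠ b → ¬ G.Adj a b) ∧
      ∀ t : Set V, (∀ a ∈ t, ∀ b ∈ t, a ≠ b → ¬ G.Adj a b) → t.ncard ≤ s.ncard := by
  classical
  -- every neighbor of v contains the point r v
  have key : ∀ u, G.Adj u v → r v ∈ Set.Icc (l u) (r u) := by
    intro u hu
    obtain ⟨x, hx1, hx2⟩ := (hadj u v hu.ne).1 hu
    exact ⟨hx1.1.trans hx2.2, hv u⟩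
  have nbr_adj : ∀ a b, G.Adj a v → G.Adj b v → a ≠ b → G.Adj a b := by
    intro a b ha hb hab
    exact (hadj a b hab).2 ⟨r v, key a ha, key b hb⟩
  -- maximum independent finset
  set P : Finset V → Prop := fun t => ∀ a ∈ t, ∀ b ∈ t, a ≠ b → ¬ G.Adj a b with hP
  set F : Finset (Finset V) := Finset.univ.filter P with hF
  have hne : (∅ : Finset V) ∈ F := by
    simp [hF, hP]
  obtain ⟨t₀, ht₀F, ht₀max⟩ := F.exists_max_image Finset.card ⟨∅, hne⟩
  have ht₀ : P t₀ := (Finset.mem_filter.1 ht₀F).2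
  set f : Finset V := t₀.filter (fun u => ¬ G.Adj u v) with hf
  set s₀ : Finset V := insert v f with hs₀
  -- independence of s₀
  have hindep : ∀ a ∈ s₀, ∀ b ∈ s₀, a ≠ b → ¬ G.Adj a b := by
    intro a ha b hb hab
    simp only [hs₀, Finset.mem_insert, hf, Finset.mem_filter] at ha hb
    rcases ha with rfl | ⟨ha, hna⟩
    · rcases hb with rfl | ⟨hb, hnb⟩
      · exact absurd rfl hab
      · exact fun h => hnb h.symm
    · rcases hb with rfl | ⟨hb, hnb⟩
      · exact hna
      · exact ht₀ a ha b hb hab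
  -- cardinality: s₀ is at least as big as t₀
  have hcard : t₀.card ≤ s₀.card := by
    set g : Finset V := t₀.filter (fun u => G.Adj u v) with hg
    have hg1 : g.card ≤ 1 := by
      rw [Finset.card_le_one]
      intro a ha b hb
      simp only [hg, Finset.mem_filter] at ha hb
      by_contra hab
      exact ht₀ a ha.1 b hb.1 hab (nbr_adj a b ha.2 hb.2 hab)
    have hsplit : g.card + f.card = t₀.card := by
      rw [hg, hf]
      simpa using Finset.card_filter_add_card_filter_not (s := t₀)
        (p := fun u => G.Adj u v)
    by_cases hvt : v ∈ t₀
    ·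
      have : f = t₀ := by
        rw [hf]
        apply Finset.filter_true_of_mem
        intro u hu
        rcases eq_or_ne u v with rfl | huv
        · exact G.irrefl
        · exact ht₀ u hu v hvt huv
      have : t₀.card ≤ f.card := le_of_eq (by rw [this])
      exact this.trans (Finset.card_le_card (by simp [hs₀, Finset.subset_insert]))
    · have hvf : v ∉ f := fun h => hvt (Finset.mem_filter.1 h).1
      have : s₀.card = f.card + 1 := by rw [hs₀, Finset.card_insert_of_notMem hvf]
      omega
  refine ⟨↑s₀, by simp [hs₀], by exact_mod_cast hindep, ?_⟩
  intro t ht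
  have htfin : t.Finite := Set.toFinite t
  have hmem : htfin.toFinset ∈ F := by
    simp only [hF, Finset.mem_filter, Finset.mem_univ, true_and, hP]
    intro a ha b hb hab
    exact ht a (htfin.mem_toFinset.1 ha) b (htfin.mem_toFinset.1 hb) hab
  have := ht₀max _ hmem
  calc t.ncard = htfin.toFinset.card := Set.ncard_eq_toFinset_card t htfin
    _ ≤ t₀.card := this
    _ ≤ s₀.card := hcard
    _ = (↑s₀ : Set V).ncard := (Set.ncard_coe_finset s₀).symm
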